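/- Let P and Q be orthogonal projections on a Hilbert space with P ∧ Q = 0 (the only subvector common to their ranges is 0), and suppose PQP is compact with largest eigenvalue a₊ < 1. Then for every unit vector f, ⟨f|Pf⟩ + ⟨f|Qf⟩ ≤ 1 + √a₊ < 2. -/
import Mathlib


open scoped InnerProductSpace
open ContinuousLinearMap

/-- Let `P` and `Q` be orthogonal projections with trivial intersection of ranges
(`P ∧ Q = 0`), and suppose `PQP` is compact with largest eigenvalue
`a₊ = ‖PQP‖ < 1`.  Then for every unit vector `f`,
`⟨f|Pf⟩ + ⟨f|Qf⟩ ≤ 1 + √a₊ < 2`. -/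
theorem stmt19 {H : Type*} [NormedAddCommGroup H] [InnerProductSpace ℂ H] [CompleteSpace H]
    (P Q : H →L[ℂ] H)
    (hP : IsSelfAdjoint P) (hPidem : P ∘L P = P)
    (hQ : IsSelfAdjoint Q) (hQidem : Q ∘L Q = Q)
    (hmeet : ∀ x : H, P x = x → Q x = x → x = 0)
    (hcompact : IsCompactOperator (P ∘L Q ∘L P))
    (hlt : ‖P ∘L Q ∘L P‖ < 1) :
    ∀ f : H, ‖f‖ = 1 →
      (⟪f, P f⟫_ℂ).re + (⟪f, Q f⟫_ℂ).re ≤ 1 + Real.sqrt ‖P ∘L Q ∘L P‖ ∧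
        1 + Real.sqrt ‖P ∘L Q ∘L P‖ < 2 := by
  intro f hf
  have ha0 : (0:ℝ) ≤ ‖P ∘L Q ∘L P‖ := norm_nonneg _
  have hPadj : ContinuousLinearMap.adjoint P = P := hP
  have hQadj : ContinuousLinearMap.adjoint Q = Q := hQ
  -- ‖Q ∘L P‖ ^ 2 = ‖P ∘L Q ∘L P‖
  have hcomp : ContinuousLinearMap.adjoint (Q ∘L P) ∘L (Q ∘L P) = P ∘L Q ∘L P := by
    rw [ContinuousLinearMap.adjoint_comp, hPadj, hQadj]
    calc (P ∘L Q) ∘L (Q ∘L P) = P ∘L ((Q ∘L Q) ∘L P) := by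
          rw [ContinuousLinearMap.comp_assoc, ContinuousLinearMap.comp_assoc]
      _ = P ∘L Q ∘L P := by rw [hQidem]
  have hQPnorm : ‖Q ∘L P‖ * ‖Q ∘L P‖ = ‖P ∘L Q ∘L P‖ := by
    rw [← hcomp, ContinuousLinearMap.norm_adjoint_comp_self]
  have hsqrt : Real.sqrt ‖P ∘L Q ∘L P‖ = ‖Q ∘L P‖ := by
    rw [← hQPnorm, Real.sqrt_mul_self (norm_nonneg _)]
  set c : ℝ := Real.sqrt ‖P ∘L Q ∘L P‖ with hc
  have hc0 : 0 ≤ c := Real.sqrt_nonneg _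
  -- projections fix their images
  have hPfix : P (P f) = P f := congrFun (congrArg DFunLike.coe hPidem) f
  have hQfix : Q (Q f) = Q f := congrFun (congrArg DFunLike.coe hQidem) f
  -- real parts are squared norms
  have h1 : (⟪f, P f⟫_ℂ).re = ‖P f‖ ^ 2 := by
    have : ⟪f, P f⟫_ℂ = ⟪P f, P f⟫_ℂ := by
      conv_lhs => rw [← hPfix]
      rw [← ContinuousLinearMap.adjoint_inner_left, hPadj]
    rw [this]; exact inner_self_eq_norm_sq (𝕜 := ℂ) _
  have h2 : (⟪f, Q f⟫_ℂ).re = ‖Q f‖ ^ 2 := by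
    have : ⟪f, Q f⟫_ℂ = ⟪Q f, Q f⟫_ℂ := by
      conv_lhs => rw [← hQfix]
      rw [← ContinuousLinearMap.adjoint_inner_left, hQadj]
    rw [this]; exact inner_self_eq_norm_sq (𝕜 := ℂ) _
  set s : ℝ := ‖P f‖ ^ 2 + ‖Q f‖ ^ 2 with hs
  -- cross term bound : re ⟪P f, Q f⟫ ≤ c * (‖P f‖ * ‖Q f‖)
  have hcross : (⟪P f, Q f⟫_ℂ).re ≤ c * (‖P f‖ * ‖Q f‖) := by
    have e1 : ⟪P f, Q f⟫_ℂ = ⟪(Q ∘L P) (P f), Q f⟫_ℂ := by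
      simp only [ContinuousLinearMap.comp_apply, hPfix]
      conv_lhs => rw [← hQfix]
      rw [← ContinuousLinearMap.adjoint_inner_left, hQadj]
    calc (⟪P f, Q f⟫_ℂ).re ≤ ‖⟪P f, Q f⟫_ℂ‖ := Complex.re_le_norm _
      _ = ‖⟪(Q ∘L P) (P f), Q f⟫_ℂ‖ := by rw [e1]
      _ ≤ ‖(Q ∘L P) (P f)‖ * ‖Q f‖ := norm_inner_le_norm _ _
      _ ≤ (‖Q ∘L P‖ * ‖P f‖) * ‖Q f‖ := by
          gcongr
          exact (Q ∘L P).le_opNorm _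
      _ = c * (‖P f‖ * ‖Q f‖) := by rw [hsqrt]; ring
  -- s ≤ ‖P f + Q f‖
  have hcs : s ≤ ‖P f + Q f‖ := by
    have : s = (⟪f, P f + Q f⟫_ℂ).re := by
      rw [inner_add_right, Complex.add_re, h1, h2]
    rw [this]
    calc (⟪f, P f + Q f⟫_ℂ).re ≤ ‖⟪f, P f + Q f⟫_ℂ‖ := Complex.re_le_norm _
      _ ≤ ‖f‖ * ‖P f + Q f‖ := norm_inner_le_norm _ _
      _ = ‖P f + Q f‖ := by rw [hf, one_mul]
  -- ‖P f + Q f‖ ^ 2 ≤ (1 + c) * s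
  have hsq : ‖P f + Q f‖ ^ 2 ≤ (1 + c) * s := by
    have hexp : ‖P f + Q f‖ ^ 2 = ‖P f‖ ^ 2 + 2 * (⟪P f, Q f⟫_ℂ).re + ‖Q f‖ ^ 2 :=
      norm_add_sq (𝕜 := ℂ) _ _
    nlinarith [hcross, sq_nonneg (‖P f‖ - ‖Q f‖), hc0, norm_nonneg (P f), norm_nonneg (Q f)]
  have hs0 : 0 ≤ s := by positivity
  have hmain : s ≤ 1 + c := by
    nlinarith [hcs, hsq, hs0, norm_nonneg (P f + Q f)]
  refine ⟨by rw [h1, h2]; exact hmain, ?_⟩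
  have : c < 1 := by
    rw [hc, show (1:ℝ) = Real.sqrt 1 by simp]
    exact Real.sqrt_lt_sqrt ha0 hlt
  linarith
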